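/- arXiv:1910.12406 — 4 statements merged into one kernel-verified Lean document; each statement's English description precedes it below -/
import Mathlib

section
/- Let 0 < η < 1/2 and let P = (p_1,…,p_l) be a probability vector with η ≤ p_j ≤ 1−η for all j. Let e_1,…,e_l > 0 and let p̂_1,…,p̂_l ∈ [0,1] satisfy |p̂_j − p_j| ≤ e_j and p̂_j ≥ (7/2)e_j for every j. Then Σ_{j=1}^l √(1/p_j − 1) ≤ Σ_{j=1}^l √(1/(p̂_j − e_j) − 1) ≤ Σ_{j=1}^l √(1/p_j − 1) + Σ_{j=1}^l min( (2/η)√(e_j) , 2 e_j / η^{5/2} ). -/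
open Finset

private lemma sqrt_le_add_of_sq (a b c : ℝ) (hb : 0 ≤ b) (hc : 0 ≤ c)
    (h : a ≤ (Real.sqrt b + c) ^ 2) : Real.sqrt a ≤ Real.sqrt b + c := by
  calc Real.sqrt a ≤ Real.sqrt ((Real.sqrt b + c) ^ 2) := Real.sqrt_le_sqrt h
    _ = Real.sqrt b + c := Real.sqrt_sq (by positivity)

set_option maxHeartbeats 1000000 in
/-- For `P` in the `η`-interior of the simplex and estimates `p̂_j`
with confidence radii `e_j` satisfying `|p̂_j − p_j| ≤ e_j` and `p̂_j ≥ (7/2)e_j`,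
`Σ_j √(1/p_j − 1) ≤ Σ_j √(1/(p̂_j − e_j) − 1)
   ≤ Σ_j √(1/p_j − 1) + Σ_j min((2/η)√e_j , 2 e_j/η^{5/2})`. -/
theorem separation_coeff_confidence
    {l : ℕ} (hl : 2 ≤ l) (η : ℝ) (hη : 0 < η) (hη' : η < 1 / 2)
    (p : Fin l → ℝ) (hp : ∀ j, p j ∈ Set.Icc η (1 - η)) (hp1 : ∑ j, p j = 1)
    (e : Fin l → ℝ) (he : ∀ j, 0 < e j)
    (phat : Fin l → ℝ) (hphat : ∀ j, phat j ∈ Set.Icc (0 : ℝ) 1)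
    (hclose : ∀ j, |phat j - p j| ≤ e j)
    (hbig : ∀ j, (7 / 2) * e j ≤ phat j) :
    (∑ j, Real.sqrt (1 / p j - 1) ≤ ∑ j, Real.sqrt (1 / (phat j - e j) - 1)) ∧
      (∑ j, Real.sqrt (1 / (phat j - e j) - 1)
        ≤ ∑ j, Real.sqrt (1 / p j - 1)
          + ∑ j, min ((2 / η) * Real.sqrt (e j)) (2 * e j / η ^ ((5 : ℝ) / 2))) := by
  have hr : η ^ ((5:ℝ)/2) = η ^ 2 * Real.sqrt η := by
    rw [Real.sqrt_eq_rpow, ← Real.rpow_natCast η 2, ← Real.rpow_add hη]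
    norm_num
  have key : ∀ j : Fin l,
      (Real.sqrt (1 / p j - 1) ≤ Real.sqrt (1 / (phat j - e j) - 1)) ∧
      Real.sqrt (1 / (phat j - e j) - 1) ≤ Real.sqrt (1 / p j - 1)
        + min ((2 / η) * Real.sqrt (e j)) (2 * e j / η ^ ((5 : ℝ) / 2)) := by
    intro j
    obtain ⟨hpl, hpu⟩ := hp j
    have hej := he j
    have hcl := abs_le.1 (hclose j)
    have hbj := hbig j
    have hq0 : 0 < phat j - e j := by linarith
    have hp0 : 0 < p j := lt_of_lt_of_le hη hpl
    have hqp : phat j - e j ≤ p j := by linarith [hcl.1]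
    have hqhalf : p j / 2 ≤ phat j - e j := by
      rcases le_total (p j) (4 * e j) with h | h
      · linarith
      · linarith [hcl.1]
    set q := phat j - e j with hqdef
    set a := 1 / q - 1 with hadef
    set b := 1 / p j - 1 with hbdef
    have hb0 : η ≤ b := by
      have h1 : (1 + η) * p j ≤ 1 := by nlinarith
      have h2 : η + 1 ≤ 1 / p j := by
        rw [le_div_iff₀ hp0]; linarith
      simp only [hbdef]; linarith
    have hbnn : (0:ℝ) ≤ b := le_trans hη.le hb0
    have hba : b ≤ a := by
      have : 1 / p j ≤ 1 / q := one_div_le_one_div_of_le hq0 hqp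
      simp only [hadef, hbdef]; linarith
    have hpq : p j - q ≤ 2 * e j := by
      simp only [hqdef]; linarith [hcl.2]
    have hab : a - b ≤ 4 * e j / η ^ 2 := by
      have h1 : a - b = (p j - q) / (p j * q) := by
        simp only [hadef, hbdef]
        field_simp
        ring
      have h2 : (p j - q) / (p j * q) ≤ 4 * e j / η ^ 2 := by
        have hqη : η / 2 ≤ q := by linarith
        have h3 : η * (η / 2) ≤ p j * q :=
          mul_le_mul hpl hqη (by linarith) hp0.le
        rw [div_le_div_iff₀ (by positivity) (by positivity)]
        calc (p j - q) * η ^ 2 ≤ 2 * e j * η ^ 2 :=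
              mul_le_mul_of_nonneg_right hpq (sq_nonneg η)
          _ = 4 * e j * (η * (η / 2)) := by ring
          _ ≤ 4 * e j * (p j * q) :=
              mul_le_mul_of_nonneg_left h3 (by positivity)
      linarith [h1 ▸ h2]
    have hsqb : Real.sqrt η ≤ Real.sqrt b := Real.sqrt_le_sqrt hb0
    have hsqη0 : 0 < Real.sqrt η := Real.sqrt_pos.2 hη
    have hsb2 : Real.sqrt b ^ 2 = b := Real.sq_sqrt hbnn
    have hse2 : Real.sqrt (e j) ^ 2 = e j := Real.sq_sqrt hej.le
    have hA2 : ((2 / η) * Real.sqrt (e j)) ^ 2 = 4 * e j / η ^ 2 := by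
      rw [mul_pow, div_pow, hse2]; ring
    have h1 : Real.sqrt a ≤ Real.sqrt b + (2 / η) * Real.sqrt (e j) := by
      apply sqrt_le_add_of_sq _ _ _ hbnn (by positivity)
      have hexp : (Real.sqrt b + (2 / η) * Real.sqrt (e j)) ^ 2
          = b + 2 * Real.sqrt b * ((2 / η) * Real.sqrt (e j)) + 4 * e j / η ^ 2 := by
        rw [add_sq, hsb2, hA2]
      have hnn : 0 ≤ 2 * Real.sqrt b * ((2 / η) * Real.sqrt (e j)) := by positivity
      linarith
    have hkey : 4 * e j / η ^ 2 ≤ 2 * Real.sqrt b * (2 * e j / (η ^ 2 * Real.sqrt η)) := by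
      have heq : 2 * Real.sqrt b * (2 * e j / (η ^ 2 * Real.sqrt η))
          = 4 * e j * Real.sqrt b / (η ^ 2 * Real.sqrt η) := by ring
      rw [heq, div_le_div_iff₀ (by positivity) (by positivity)]
      nlinarith [mul_le_mul_of_nonneg_left hsqb (show (0:ℝ) ≤ 4 * e j * η ^ 2 by positivity)]

    have h2 : Real.sqrt a ≤ Real.sqrt b + 2 * e j / (η ^ 2 * Real.sqrt η) := by
      apply sqrt_le_add_of_sq _ _ _ hbnn (by positivity)
      have hexp : (Real.sqrt b + 2 * e j / (η ^ 2 * Real.sqrt η)) ^ 2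
          = b + 2 * Real.sqrt b * (2 * e j / (η ^ 2 * Real.sqrt η))
            + (2 * e j / (η ^ 2 * Real.sqrt η)) ^ 2 := by
        rw [add_sq, hsb2]
      linarith [sq_nonneg (2 * e j / (η ^ 2 * Real.sqrt η)), hkey, hab]
    refine ⟨Real.sqrt_le_sqrt hba, ?_⟩
    rw [hr]
    rcases le_total ((2 / η) * Real.sqrt (e j)) (2 * e j / (η ^ 2 * Real.sqrt η)) with h | h
    · rwa [min_eq_left h]
    · rwa [min_eq_right h]
  constructor
  · exact Finset.sum_le_sum fun j _ => (key j).1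
  · calc ∑ j, Real.sqrt (1 / (phat j - e j) - 1)
        ≤ ∑ j, (Real.sqrt (1 / p j - 1)
            + min ((2 / η) * Real.sqrt (e j)) (2 * e j / η ^ ((5 : ℝ) / 2))) :=
          Finset.sum_le_sum fun j _ => (key j).2
      _ = _ := Finset.sum_add_distrib
end

section
/- Let γ_1,…,γ_K and φ_1,…,φ_K be real-valued functions on (0,∞), with each γ_i strictly decreasing, and set R_i = γ_i − φ_i. Suppose T_1*,…,T_K* > 0 and T̃_1*,…,T̃_K* > 0 satisfy Σ_{i=1}^K T_i* = Σ_{i=1}^K T̃_i*, that γ_i(T_i*) = μ for all i (some common value μ), and that φ_i(T̃_i*) = λ for all i (some common value λ). Then |λ − μ| ≤ 2 max_{1≤i≤K} |R_i(T̃_i*)|. -/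
open Finset

/-- If the strictly decreasing exact objectives `γ_i` are equalized
(to `μ`) by the oracle allocation `(T_i*)` and the approximations `φ_i` are
equalized (to `λ`) by the approx-oracle allocation `(T̃_i*)`, both with the same
total budget, then `|λ − μ| ≤ 2 max_i |R_i(T̃_i*)|` where `R_i = γ_i − φ_i`. -/
theorem approx_oracle_value_close
    (K : ℕ) (hK : 1 ≤ K)
    (γ φ : Fin K → ℝ → ℝ)
    (hγ : ∀ i, StrictAntiOn (γ i) (Set.Ioi 0))
    (Ts Tt : Fin K → ℝ) (hTs : ∀ i, 0 < Ts i) (hTt : ∀ i, 0 < Tt i)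
    (hbudget : ∑ i, Ts i = ∑ i, Tt i)
    (mu lam : ℝ) (hmu : ∀ i, γ i (Ts i) = mu) (hlam : ∀ i, φ i (Tt i) = lam) :
    |lam - mu| ≤ 2 * ⨆ i, |γ i (Tt i) - φ i (Tt i)| := by
  haveI : Nonempty (Fin K) := Fin.pos_iff_nonempty.mp hK
  set M := ⨆ i, |γ i (Tt i) - φ i (Tt i)| with hMdef
  have hbdd : BddAbove (Set.range fun i => |γ i (Tt i) - φ i (Tt i)|) :=
    (Set.finite_range _).bddAbove
  have hM : ∀ i, |γ i (Tt i) - φ i (Tt i)| ≤ M := fun i => le_ciSup hbdd i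
  have hM0 : 0 ≤ M := le_trans (abs_nonneg _) (hM (Classical.arbitrary _))
  have hanti : ∀ i : Fin K, Ts i ≤ Tt i → γ i (Tt i) ≤ γ i (Ts i) := fun i h =>
    (hγ i).antitoneOn (hTs i) (hTt i) h
  have hanti' : ∀ i : Fin K, Tt i ≤ Ts i → γ i (Ts i) ≤ γ i (Tt i) := fun i h =>
    (hγ i).antitoneOn (hTt i) (hTs i) h
  have h1 : ∃ i, Ts i ≤ Tt i := by
    by_contra h
    push_neg at h
    have := Finset.sum_lt_sum_of_nonempty Finset.univ_nonempty
      (fun i _ => h i)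
    linarith [hbudget]
  have h2 : ∃ j, Tt j ≤ Ts j := by
    by_contra h
    push_neg at h
    have := Finset.sum_lt_sum_of_nonempty Finset.univ_nonempty
      (fun i _ => h i)
    linarith [hbudget]
  obtain ⟨i, hi⟩ := h1
  obtain ⟨j, hj⟩ := h2
  have e1 : lam - mu ≤ M := by
    have := hanti i hi
    have habs := abs_le.mp (hM i)
    calc lam - mu = φ i (Tt i) - mu := by rw [hlam i]
      _ ≤ φ i (Tt i) - γ i (Tt i) := by linarith [hmu i]
      _ ≤ M := by linarith [habs.1]
  have e2 : mu - lam ≤ M := by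
    have := hanti' j hj
    have habs := abs_le.mp (hM j)
    calc mu - lam = mu - φ j (Tt j) := by rw [hlam j]
      _ ≤ γ j (Tt j) - φ j (Tt j) := by linarith [hmu j]
      _ ≤ M := habs.2
  have : |lam - mu| ≤ M := abs_sub_le_iff.mpr ⟨e1, e2⟩
  linarith
end

section
/- Let n ≥ 1, let 1/2 < p_0 < 1 and 0 < ε < p_0 − 1/2, let c : (0,1) → (0,∞) be any function and α > 0. Consider two-armed Bernoulli problem instances: instance P_1 has arm distributions (Bernoulli(p_0), Bernoulli(p_0 − ε)) and instance P_2 has (Bernoulli(p_0 − ε), Bernoulli(p_0)); for an instance with arm parameters giving values c_1 = c(parameter of arm 1) and c_2 = c(parameter of arm 2), the approx-oracle allocation is T̃_i* = n·c_i^{1/α}/(c_1^{1/α} + c_2^{1/α}). Then for every adaptive allocation scheme with budget n, denoting by T_i the (random) total number of samples it draws from arm i, one has max over the two instances of max_{i∈{1,2}} E[ |T_i − T̃_i*| ] ≥ ((1 − ε·√(n/(1−p_0)))/2) · (n/2) · |c(p_0)^{1/α} − c(p_0−ε)^{1/α}| / ( c(p_0)^{1/α} + c(p_0−ε)^{1/α}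 ). -/
open Finset

/-- The arm chosen at round `t` by the adaptive scheme `π` on the outcome
sequence `ω`: `π` sees only the strict prefix of outcomes before round `t`. -/
def chosenArm (π : (t : ℕ) → (Fin t → Bool) → Fin 2) {n : ℕ}
    (ω : Fin n → Bool) (t : Fin n) : Fin 2 :=
  π t.1 (fun s : Fin t.1 => ω ⟨s.1, s.2.trans t.2⟩)

/-- The probability mass of a full outcome sequence `ω ∈ {0,1}^n` under the
two-armed Bernoulli instance with parameters `θ` and the adaptive scheme `π`. -/
def seqProb (θ : Fin 2 → ℝ) (π : (t : ℕ) → (Fin t → Bool) → Fin 2) {n : ℕ}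
    (ω : Fin n → Bool) : ℝ :=
  ∏ t : Fin n, (if ω t then θ (chosenArm π ω t) else 1 - θ (chosenArm π ω t))

/-- `T_i(ω)`: the total number of rounds in which arm `i` is chosen. -/
def pulls (π : (t : ℕ) → (Fin t → Bool) → Fin 2) {n : ℕ}
    (ω : Fin n → Bool) (i : Fin 2) : ℕ :=
  (Finset.univ.filter (fun t => chosenArm π ω t = i)).card

/-- `E[|T_i − target|]` under the instance `θ` with scheme `π` and budget `n`. -/
noncomputable def expDev (θ : Fin 2 → ℝ) (π : (t : ℕ) → (Fin t → Bool) → Fin 2)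
    (n : ℕ) (i : Fin 2) (target : ℝ) : ℝ :=
  ∑ ω : Fin n → Bool, seqProb θ π ω * |(pulls π ω i : ℝ) - target|

variable  {π : (t : ℕ) → (Fin t → Bool) → Fin 2}

lemma chosenArm_snoc {n : ℕ} (ω : Fin n → Bool) (b : Bool) (t : Fin n) :
    chosenArm π (Fin.snoc ω b) t.castSucc = chosenArm π ω t := by
  unfold chosenArm
  congr 1
  funext s
  have hs : (s.1 : ℕ) < n := s.2.trans t.2
  simp [Fin.snoc, hs]

lemma chosenArm_snoc_last {n : ℕ} (ω : Fin n → Bool) (b : Bool) :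
    chosenArm π (Fin.snoc ω b) (Fin.last n) = π n ω := by
  unfold chosenArm
  congr 1
  funext s
  simp [Fin.snoc, s.2]

lemma seqProb_snoc (θ : Fin 2 → ℝ) {n : ℕ} (ω : Fin n → Bool) (b : Bool) :
    seqProb θ π (Fin.snoc ω b) =
      seqProb θ π ω * (if b then θ (π n ω) else 1 - θ (π n ω)) := by
  unfold seqProb
  rw [Fin.prod_univ_castSucc]
  congr 1
  · refine Finset.prod_congr rfl fun t _ => ?_
    rw [chosenArm_snoc]
    have : Fin.snoc (α := fun _ => Bool) ω b t.castSucc = ω t := Fin.snoc_castSucc ..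
    rw [this]
  · rw [chosenArm_snoc_last, Fin.snoc_last]

lemma sum_snoc (f : (Fin (n+1) → Bool) → ℝ) :
    ∑ ω : Fin (n+1) → Bool, f ω
      = ∑ ω : Fin n → Bool, ∑ b : Bool, f (Fin.snoc ω b) := by
  rw [← (Fin.snocEquiv (fun _ => Bool)).sum_comp f, Fintype.sum_prod_type]
  rw [Finset.sum_comm]
  rfl

lemma seqProb_nonneg (θ : Fin 2 → ℝ) (hθ : ∀ i, 0 ≤ θ i ∧ θ i ≤ 1) {n : ℕ}
    (ω : Fin n → Bool) : 0 ≤ seqProb θ π ω := by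
  refine Finset.prod_nonneg fun t _ => ?_
  rcases hθ (chosenArm π ω t) with ⟨h1, h2⟩
  cases ω t <;> simp <;> linarith

lemma sum_sqrt_seqProb (θ1 θ2 : Fin 2 → ℝ)
    (hθ1 : ∀ i, 0 ≤ θ1 i ∧ θ1 i ≤ 1) (hθ2 : ∀ i, 0 ≤ θ2 i ∧ θ2 i ≤ 1)
    (ρ : ℝ)
    (hρ : ∀ a : Fin 2, Real.sqrt (θ1 a * θ2 a)
          + Real.sqrt ((1 - θ1 a) * (1 - θ2 a)) = ρ) :
    ∀ n : ℕ, ∑ ω : Fin n → Bool, Real.sqrt (seqProb θ1 π ω * seqProb θ2 π ω) = ρ ^ n := by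
  intro n
  induction n with
  | zero =>
    rw [Fintype.sum_unique]
    simp [seqProb]
  | succ n ih =>
    rw [sum_snoc, pow_succ]
    rw [← ih, Finset.sum_mul]
    refine Finset.sum_congr rfl fun ω _ => ?_
    have h1 := seqProb_nonneg (π := π) θ1 hθ1 ω
    have h2 := seqProb_nonneg (π := π) θ2 hθ2 ω
    rcases hθ1 (π n ω) with ⟨a1, a2⟩
    rcases hθ2 (π n ω) with ⟨b1, b2⟩
    rw [Fintype.sum_bool]
    rw [seqProb_snoc, seqProb_snoc, seqProb_snoc, seqProb_snoc]
    simp only [Bool.false_eq_true, if_false, if_true]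
    rw [show seqProb θ1 π ω * θ1 (π n ω) * (seqProb θ2 π ω * θ2 (π n ω))
        = (seqProb θ1 π ω * seqProb θ2 π ω) * (θ1 (π n ω) * θ2 (π n ω)) by ring,
      show seqProb θ1 π ω * (1 - θ1 (π n ω)) * (seqProb θ2 π ω * (1 - θ2 (π n ω)))
        = (seqProb θ1 π ω * seqProb θ2 π ω) * ((1 - θ1 (π n ω)) * (1 - θ2 (π n ω))) by ring,
      Real.sqrt_mul (mul_nonneg h1 h2), Real.sqrt_mul (mul_nonneg h1 h2), ← mul_add,
      hρ (π n ω)]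

lemma sum_seqProb (θ : Fin 2 → ℝ) (hθ : ∀ i, 0 ≤ θ i ∧ θ i ≤ 1) (n : ℕ) :
    ∑ ω : Fin n → Bool, seqProb θ π ω = 1 := by
  have h := sum_sqrt_seqProb (π := π) θ θ hθ hθ 1 (fun a => by
    rcases hθ a with ⟨h1, h2⟩
    rw [Real.sqrt_mul_self h1, Real.sqrt_mul_self (by linarith)]
    ring) n
  rw [one_pow] at h
  rw [← h]
  refine Finset.sum_congr rfl fun ω _ => ?_
  rw [Real.sqrt_mul_self (seqProb_nonneg θ hθ ω)]

lemma pulls_add {n : ℕ} (ω : Fin n → Bool) :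
    pulls π ω 0 + pulls π ω 1 = n := by
  unfold pulls
  have heq : (Finset.univ.filter (fun t => chosenArm π ω t = 1))
      = Finset.univ.filter (fun t => ¬ chosenArm π ω t = 0) := by
    refine Finset.filter_congr fun t _ => ?_
    constructor
    · intro h h0; rw [h0] at h; exact absurd h (by decide)
    · intro h
      have := (chosenArm π ω t).2
      omega
  rw [heq, Finset.card_filter_add_card_filter_not, Finset.card_univ,
    Fintype.card_fin]

lemma one_sub_pow_le (ρ : ℝ) (h0 : 0 ≤ ρ) (h1 : ρ ≤ 1) (n : ℕ) :
    1 - ρ ^ n ≤ n * (1 - ρ) := by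
  induction n with
  | zero => simp
  | succ n ih =>
    have hp : ρ ^ n ≤ 1 := pow_le_one₀ h0 h1
    have hpn : 0 ≤ ρ ^ n := pow_nonneg h0 n
    rw [pow_succ]
    push_cast
    nlinarith

set_option maxHeartbeats 1000000 in
lemma rho_bounds (p0 ε : ℝ) (hp0 : 1/2 < p0) (hp0' : p0 < 1) (hε : 0 < ε)
    (hε' : ε < p0 - 1/2) :
    0 ≤ Real.sqrt (p0*(p0-ε)) + Real.sqrt ((1-p0)*(1-(p0-ε))) ∧
    Real.sqrt (p0*(p0-ε)) + Real.sqrt ((1-p0)*(1-(p0-ε))) ≤ 1 ∧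
    1 - (Real.sqrt (p0*(p0-ε)) + Real.sqrt ((1-p0)*(1-(p0-ε))))
      ≤ ε^2 / (2*(1-p0)) := by
  have h1 : (0:ℝ) ≤ p0 := by linarith
  have h2 : (0:ℝ) ≤ p0 - ε := by linarith
  have h3 : (0:ℝ) ≤ 1 - p0 := by linarith
  have h4 : (0:ℝ) ≤ 1 - (p0 - ε) := by linarith
  rw [Real.sqrt_mul h1, Real.sqrt_mul h3]
  set s := Real.sqrt p0 with hs_def
  set t := Real.sqrt (p0 - ε) with ht_def
  set u := Real.sqrt (1 - p0) with hu_def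
  set v := Real.sqrt (1 - (p0 - ε)) with hv_def
  have hs2 : s^2 = p0 := Real.sq_sqrt h1
  have ht2 : t^2 = p0 - ε := Real.sq_sqrt h2
  have hu2 : u^2 = 1 - p0 := Real.sq_sqrt h3
  have hv2 : v^2 = 1 - (p0 - ε) := Real.sq_sqrt h4
  have hs0 : 0 ≤ s := Real.sqrt_nonneg _
  have ht0 : 0 ≤ t := Real.sqrt_nonneg _
  have hu0 : 0 ≤ u := Real.sqrt_nonneg _
  have hv0 : 0 ≤ v := Real.sqrt_nonneg _
  have hst : t ≤ s := Real.sqrt_le_sqrt (by linarith)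
  have huv : u ≤ v := Real.sqrt_le_sqrt (by linarith)
  refine ⟨by positivity, ?_, ?_⟩
  · nlinarith [sq_nonneg (s*v - u*t), sq_nonneg (s*t + u*v), mul_nonneg hs0 ht0,
      mul_nonneg hu0 hv0]
  · have hst_eq : (s - t) * (s + t) = ε := by linear_combination hs2 - ht2
    have huv_eq : (u - v) * (u + v) = -ε := by linear_combination hu2 - hv2
    have hstq : (s - t)^2 * (s + t)^2 = ε^2 := by
      rw [← mul_pow, hst_eq]
    have huvq : (u - v)^2 * (u + v)^2 = ε^2 := by
      rw [← mul_pow, huv_eq, neg_sq]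
    have hst_lb : 2 ≤ (s + t)^2 := by
      nlinarith [mul_nonneg ht0 (sub_nonneg.2 hst), hs2, ht2]
    have huv_lb : 4 * (1 - p0) ≤ (u + v)^2 := by
      nlinarith [mul_nonneg hu0 (sub_nonneg.2 huv), hu2, hv2]
    have hst_ub : (s - t)^2 * 2 ≤ ε^2 := by
      calc (s - t)^2 * 2 ≤ (s - t)^2 * (s + t)^2 :=
            mul_le_mul_of_nonneg_left hst_lb (sq_nonneg _)
        _ = ε^2 := hstq
    have huv_ub : (u - v)^2 * (4 * (1 - p0)) ≤ ε^2 := by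
      calc (u - v)^2 * (4 * (1 - p0)) ≤ (u - v)^2 * (u + v)^2 :=
            mul_le_mul_of_nonneg_left huv_lb (sq_nonneg _)
        _ = ε^2 := huvq
    have hkey : 1 - (s*t + u*v) = ((s-t)^2 + (u-v)^2) / 2 := by
      linear_combination -(hs2 + ht2 + hu2 + hv2) / 2
    rw [hkey, div_le_div_iff₀ (by norm_num) (by linarith)]
    have A : (s - t)^2 * 2 * (1 - p0) ≤ ε^2 * (1 - p0) :=
      mul_le_mul_of_nonneg_right hst_ub h3
    have C : ε^2 * (1 - p0) ≤ ε^2 := by nlinarith [sq_nonneg ε]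
    nlinarith [A, C, huv_ub]

set_option maxHeartbeats 2000000 in
/-- Change-of-measure lower bound for tracking.  For any adaptive
allocation scheme with budget `n` on the two two-armed Bernoulli instances
`P₁ = (Ber(p₀), Ber(p₀−ε))`, `P₂ = (Ber(p₀−ε), Ber(p₀))`, the worst (over the two
instances and two arms) expected deviation of the pull counts from the
approx-oracle allocation `T̃_i* = n c_i^{1/α}/(c₁^{1/α}+c₂^{1/α})` is at least
`((1 − ε√(n/(1−p₀)))/2)·(n/2)·|c(p₀)^{1/α} − c(p₀−ε)^{1/α}|/(c(p₀)^{1/α}+c(p₀−ε)^{1/α})`. -/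
theorem tracking_lower_bound
    (n : ℕ) (hn : 1 ≤ n) (p0 ε : ℝ)
    (hp0 : 1 / 2 < p0) (hp0' : p0 < 1) (hε : 0 < ε) (hε' : ε < p0 - 1 / 2)
    (c : ℝ → ℝ) (hc : ∀ x ∈ Set.Ioo (0 : ℝ) 1, 0 < c x) (α : ℝ) (hα : 0 < α)
    (π : (t : ℕ) → (Fin t → Bool) → Fin 2)
    (θ1 θ2 : Fin 2 → ℝ) (hθ1 : θ1 = ![p0, p0 - ε]) (hθ2 : θ2 = ![p0 - ε, p0])
    (D : ℝ) (hD : D = c p0 ^ (1 / α) + c (p0 - ε) ^ (1 / α)) :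
    ((1 - ε * Real.sqrt ((n : ℝ) / (1 - p0))) / 2) * ((n : ℝ) / 2) *
        |c p0 ^ (1 / α) - c (p0 - ε) ^ (1 / α)| / D
      ≤ max
          (max (expDev θ1 π n 0 ((n : ℝ) * c p0 ^ (1 / α) / D))
               (expDev θ1 π n 1 ((n : ℝ) * c (p0 - ε) ^ (1 / α) / D)))
          (max (expDev θ2 π n 0 ((n : ℝ) * c (p0 - ε) ^ (1 / α) / D))
               (expDev θ2 π n 1 ((n : ℝ) * c p0 ^ (1 / α) / D))) := by
  have hn1 : (1:ℝ) ≤ (n:ℝ) := by exact_mod_cast hn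
  have hc1 : 0 < c p0 := hc p0 ⟨by linarith, hp0'⟩
  have hc2 : 0 < c (p0 - ε) := hc (p0 - ε) ⟨by linarith, by linarith⟩
  have ha : 0 < c p0 ^ (1/α) := Real.rpow_pos_of_pos hc1 _
  have hb : 0 < c (p0 - ε) ^ (1/α) := Real.rpow_pos_of_pos hc2 _
  have hDpos : 0 < D := by rw [hD]; norm_num at ha hb ⊢; linarith
  have hθ1b : ∀ i, 0 ≤ θ1 i ∧ θ1 i ≤ 1 := by
    rw [hθ1]; intro i
    fin_cases i <;> constructor <;> simp <;> linarith
  have hθ2b : ∀ i, 0 ≤ θ2 i ∧ θ2 i ≤ 1 := by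
    rw [hθ2]; intro i
    fin_cases i <;> constructor <;> simp <;> linarith
  have hED : ∀ (θ : Fin 2 → ℝ), (∀ i, 0 ≤ θ i ∧ θ i ≤ 1) →
      ∀ (i : Fin 2) (target : ℝ), 0 ≤ expDev θ π n i target := fun θ hθ i target =>
    Finset.sum_nonneg fun ω _ => mul_nonneg (seqProb_nonneg θ hθ ω) (abs_nonneg _)
  set K := Real.sqrt ((n:ℝ)/(1-p0)) with hK_def
  have hK0 : 0 ≤ K := Real.sqrt_nonneg _
  have hM0 : 0 ≤ max
          (max (expDev θ1 π n 0 ((n : ℝ) * c p0 ^ (1 / α) / D))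
               (expDev θ1 π n 1 ((n : ℝ) * c (p0 - ε) ^ (1 / α) / D)))
          (max (expDev θ2 π n 0 ((n : ℝ) * c (p0 - ε) ^ (1 / α) / D))
               (expDev θ2 π n 1 ((n : ℝ) * c p0 ^ (1 / α) / D))) :=
    le_trans (hED θ1 hθ1b 0 _) (le_trans (le_max_left _ _) (le_max_left _ _))
  by_cases hcase : 1 ≤ ε * K
  · refine le_trans ?_ hM0
    have h1 : 1 - ε * K ≤ 0 := by linarith
    have h2 : 0 ≤ ((n:ℝ)/2) * |c p0 ^ (1/α) - c (p0-ε) ^ (1/α)| / D := by positivity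
    calc ((1 - ε * K)/2) * ((n:ℝ)/2) * |c p0 ^ (1/α) - c (p0-ε) ^ (1/α)| / D
        = ((1 - ε * K)/2) * (((n:ℝ)/2) * |c p0 ^ (1/α) - c (p0-ε) ^ (1/α)| / D) := by
          ring
      _ ≤ 0 := mul_nonpos_of_nonpos_of_nonneg (by linarith) h2
  · push_neg at hcase
    -- the Bhattacharyya coefficient per round
    set ρ := Real.sqrt (p0*(p0-ε)) + Real.sqrt ((1-p0)*(1-(p0-ε))) with hρ_def
    obtain ⟨hρ0, hρ1, hρgap⟩ := rho_bounds p0 ε hp0 hp0' hε hε'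
    have hρarm : ∀ a : Fin 2, Real.sqrt (θ1 a * θ2 a)
        + Real.sqrt ((1 - θ1 a) * (1 - θ2 a)) = ρ := by
      intro a
      rw [hθ1, hθ2]
      fin_cases a
      · simp [hρ_def]
      · simp [hρ_def, mul_comm]
    have hBC : ∑ ω : Fin n → Bool,
        Real.sqrt (seqProb θ1 π ω * seqProb θ2 π ω) = ρ ^ n :=
      sum_sqrt_seqProb θ1 θ2 hθ1b hθ2b ρ hρarm n
    have hsum1 : ∑ ω : Fin n → Bool, seqProb θ1 π ω = 1 := sum_seqProb θ1 hθ1b n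
    have hsum2 : ∑ ω : Fin n → Bool, seqProb θ2 π ω = 1 := sum_seqProb θ2 hθ2b n
    set d := ∑ ω : Fin n → Bool, |seqProb θ1 π ω - seqProb θ2 π ω| with hd_def
    have hP1 : ∀ ω : Fin n → Bool, 0 ≤ seqProb θ1 π ω :=
      fun ω => seqProb_nonneg θ1 hθ1b ω
    have hP2 : ∀ ω : Fin n → Bool, 0 ≤ seqProb θ2 π ω :=
      fun ω => seqProb_nonneg θ2 hθ2b ω
    have hd0 : 0 ≤ d := Finset.sum_nonneg fun ω _ => abs_nonneg _
    -- Cauchy-Schwarz bound  d ≤ 2 ε K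
    have hS2 : ∑ ω : Fin n → Bool,
        (Real.sqrt (seqProb θ1 π ω) - Real.sqrt (seqProb θ2 π ω))^2 = 2 - 2*ρ^n := by
      have hpt : ∀ ω : Fin n → Bool,
          (Real.sqrt (seqProb θ1 π ω) - Real.sqrt (seqProb θ2 π ω))^2
            = seqProb θ1 π ω + seqProb θ2 π ω
              - 2 * Real.sqrt (seqProb θ1 π ω * seqProb θ2 π ω) := by
        intro ω
        rw [sub_sq, Real.sq_sqrt (hP1 ω), Real.sq_sqrt (hP2 ω),
          Real.sqrt_mul (hP1 ω)]
        ring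
      rw [Finset.sum_congr rfl fun ω _ => hpt ω]
      rw [Finset.sum_sub_distrib, Finset.sum_add_distrib, hsum1, hsum2,
        ← Finset.mul_sum, hBC]
      ring
    have hS3 : ∑ ω : Fin n → Bool,
        (Real.sqrt (seqProb θ1 π ω) + Real.sqrt (seqProb θ2 π ω))^2 = 2 + 2*ρ^n := by
      have hpt : ∀ ω : Fin n → Bool,
          (Real.sqrt (seqProb θ1 π ω) + Real.sqrt (seqProb θ2 π ω))^2
            = seqProb θ1 π ω + seqProb θ2 π ω
              + 2 * Real.sqrt (seqProb θ1 π ω * seqProb θ2 π ω) := by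
        intro ω
        rw [add_sq, Real.sq_sqrt (hP1 ω), Real.sq_sqrt (hP2 ω),
          Real.sqrt_mul (hP1 ω)]
        ring
      rw [Finset.sum_congr rfl fun ω _ => hpt ω]
      rw [Finset.sum_add_distrib, Finset.sum_add_distrib, hsum1, hsum2,
        ← Finset.mul_sum, hBC]
      ring
    have hdrw : d = ∑ ω : Fin n → Bool,
        |Real.sqrt (seqProb θ1 π ω) - Real.sqrt (seqProb θ2 π ω)|
          * (Real.sqrt (seqProb θ1 π ω) + Real.sqrt (seqProb θ2 π ω)) := by
      rw [hd_def]
      refine Finset.sum_congr rfl fun ω _ => ?_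
      have : seqProb θ1 π ω - seqProb θ2 π ω
          = (Real.sqrt (seqProb θ1 π ω) - Real.sqrt (seqProb θ2 π ω))
            * (Real.sqrt (seqProb θ1 π ω) + Real.sqrt (seqProb θ2 π ω)) := by
        have e1 := Real.sq_sqrt (hP1 ω)
        have e2 := Real.sq_sqrt (hP2 ω)
        nlinarith [e1, e2]
      rw [this, abs_mul, abs_of_nonneg (by positivity :
        (0:ℝ) ≤ Real.sqrt (seqProb θ1 π ω) + Real.sqrt (seqProb θ2 π ω))]
    have hCS : d^2 ≤ (2 - 2*ρ^n) * (2 + 2*ρ^n) := by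
      have habs : ∑ ω : Fin n → Bool,
          |Real.sqrt (seqProb θ1 π ω) - Real.sqrt (seqProb θ2 π ω)|^2
            = ∑ ω : Fin n → Bool,
              (Real.sqrt (seqProb θ1 π ω) - Real.sqrt (seqProb θ2 π ω))^2 :=
        Finset.sum_congr rfl fun ω _ => sq_abs _
      rw [hdrw, ← hS2, ← hS3, ← habs]
      exact Finset.sum_mul_sq_le_sq_mul_sq Finset.univ _ _
    have hρn1 : ρ ^ n ≤ 1 := pow_le_one₀ hρ0 hρ1
    have hρn0 : 0 ≤ ρ ^ n := pow_nonneg hρ0 n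
    have hgeom : 1 - ρ ^ n ≤ (n:ℝ) * (1 - ρ) := one_sub_pow_le ρ hρ0 hρ1 n
    have h1p0 : (1:ℝ) - p0 ≠ 0 := by linarith
    have hK2 : K^2 = (n:ℝ)/(1-p0) :=
      Real.sq_sqrt (div_nonneg (Nat.cast_nonneg n) (by linarith))
    have hd2 : d^2 ≤ (2*(ε*K))^2 := by
      have step1 : (2 - 2*ρ^n) * (2 + 2*ρ^n) ≤ 4 * (2 - 2*ρ^n) := by nlinarith
      have step2 : 4 * (2 - 2*ρ^n) ≤ 8 * ((n:ℝ) * (1 - ρ)) := by linarith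
      have step3 : (n:ℝ) * (1 - ρ) ≤ (n:ℝ) * (ε^2 / (2*(1-p0))) :=
        mul_le_mul_of_nonneg_left hρgap (by linarith)
      have step4 : (2*(ε*K))^2 = 4 * (ε^2 * ((n:ℝ)/(1-p0))) := by
        rw [mul_pow, mul_pow, hK2]; ring
      have step5 : 8 * ((n:ℝ) * (ε^2 / (2*(1-p0)))) = 4 * (ε^2 * ((n:ℝ)/(1-p0))) := by
        field_simp
        ring
      calc d^2 ≤ (2 - 2*ρ^n) * (2 + 2*ρ^n) := hCS
        _ ≤ 4 * (2 - 2*ρ^n) := step1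
        _ ≤ 8 * ((n:ℝ) * (1 - ρ)) := step2
        _ ≤ 8 * ((n:ℝ) * (ε^2 / (2*(1-p0)))) := by linarith
        _ = (2*(ε*K))^2 := by rw [step5, ← step4]
    have hd : d ≤ 2*(ε*K) := by
      calc d = Real.sqrt (d^2) := (Real.sqrt_sq hd0).symm
        _ ≤ Real.sqrt ((2*(ε*K))^2) := Real.sqrt_le_sqrt hd2
        _ = 2*(ε*K) := Real.sqrt_sq (by positivity)
    -- main change-of-measure argument
    set t1 := (n : ℝ) * c p0 ^ (1 / α) / D with ht1_def
    set t2 := (n : ℝ) * c (p0 - ε) ^ (1 / α) / D with ht2_def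
    set E1 := expDev θ1 π n 0 t1 with hE1_def
    set E2 := expDev θ2 π n 0 t2 with hE2_def
    have hmin : ∀ ω : Fin n → Bool,
        min (seqProb θ1 π ω) (seqProb θ2 π ω) * |t1 - t2|
          ≤ seqProb θ1 π ω * |(pulls π ω 0 : ℝ) - t1|
            + seqProb θ2 π ω * |(pulls π ω 0 : ℝ) - t2| := by
      intro ω
      have h0 : 0 ≤ min (seqProb θ1 π ω) (seqProb θ2 π ω) := le_min (hP1 ω) (hP2 ω)
      have tri : |t1 - t2| ≤ |(pulls π ω 0 : ℝ) - t1| + |(pulls π ω 0 : ℝ) - t2| := by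
        have := abs_sub_le t1 ((pulls π ω 0 : ℝ)) t2
        rw [abs_sub_comm t1 ((pulls π ω 0 : ℝ))] at this
        exact this
      calc min (seqProb θ1 π ω) (seqProb θ2 π ω) * |t1 - t2|
          ≤ min (seqProb θ1 π ω) (seqProb θ2 π ω)
              * (|(pulls π ω 0 : ℝ) - t1| + |(pulls π ω 0 : ℝ) - t2|) :=
            mul_le_mul_of_nonneg_left tri h0
        _ = min (seqProb θ1 π ω) (seqProb θ2 π ω) * |(pulls π ω 0 : ℝ) - t1|
              + min (seqProb θ1 π ω) (seqProb θ2 π ω) * |(pulls π ω 0 : ℝ) - t2| := by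
            ring
        _ ≤ seqProb θ1 π ω * |(pulls π ω 0 : ℝ) - t1|
              + seqProb θ2 π ω * |(pulls π ω 0 : ℝ) - t2| := by
            gcongr
            · exact min_le_left _ _
            · exact min_le_right _ _
    have hsummin : ∑ ω : Fin n → Bool,
        min (seqProb θ1 π ω) (seqProb θ2 π ω) = 1 - d/2 := by
      have hpt : ∀ ω : Fin n → Bool, min (seqProb θ1 π ω) (seqProb θ2 π ω)
          = (seqProb θ1 π ω + seqProb θ2 π ω - |seqProb θ1 π ω - seqProb θ2 π ω|)/2 := by
        intro ω
        rcases le_total (seqProb θ1 π ω) (seqProb θ2 π ω) with h | h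
        · rw [min_eq_left h, abs_of_nonpos (by linarith)]; ring
        · rw [min_eq_right h, abs_of_nonneg (by linarith)]; ring
      rw [Finset.sum_congr rfl fun ω _ => hpt ω]
      rw [← Finset.sum_div, Finset.sum_sub_distrib, Finset.sum_add_distrib,
        hsum1, hsum2, ← hd_def]
      ring
    have hlow : (1 - d/2) * |t1 - t2| ≤ E1 + E2 := by
      have : (∑ ω : Fin n → Bool, min (seqProb θ1 π ω) (seqProb θ2 π ω)) * |t1 - t2|
          ≤ E1 + E2 := by
        rw [Finset.sum_mul, hE1_def, hE2_def]
        unfold expDev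
        rw [← Finset.sum_add_distrib]
        exact Finset.sum_le_sum fun ω _ => hmin ω
      rwa [hsummin] at this
    -- arithmetic finish
    have ht12 : |t1 - t2| = (n:ℝ) * |c p0 ^ (1/α) - c (p0-ε) ^ (1/α)| / D := by
      rw [ht1_def, ht2_def, div_sub_div_same, ← mul_sub, abs_div, abs_mul,
        abs_of_pos hDpos, Nat.abs_cast]
    have hE1M : E1 ≤ max
          (max (expDev θ1 π n 0 t1) (expDev θ1 π n 1 t2))
          (max (expDev θ2 π n 0 t2) (expDev θ2 π n 1 t1)) :=
      le_trans (le_max_left _ _) (le_max_left _ _)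
    have hE2M : E2 ≤ max
          (max (expDev θ1 π n 0 t1) (expDev θ1 π n 1 t2))
          (max (expDev θ2 π n 0 t2) (expDev θ2 π n 1 t1)) :=
      le_trans (le_max_left _ _) (le_max_right _ _)
    have hmaxM : (E1 + E2)/2 ≤ max
          (max (expDev θ1 π n 0 t1) (expDev θ1 π n 1 t2))
          (max (expDev θ2 π n 0 t2) (expDev θ2 π n 1 t1)) := by
      rcases le_total E1 E2 with h | h
      · exact le_trans (by linarith) hE2M
      · exact le_trans (by linarith) hE1M
    refine le_trans ?_ hmaxM
    -- LHS ≤ (E1+E2)/2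
    have hQ : 0 ≤ (n:ℝ) * |c p0 ^ (1/α) - c (p0-ε) ^ (1/α)| / D := by positivity
    have h1K : 0 ≤ 1 - ε*K := by linarith
    have hcore : (1 - ε*K) * ((n:ℝ) * |c p0 ^ (1/α) - c (p0-ε) ^ (1/α)| / D)
        ≤ E1 + E2 := by
      calc (1 - ε*K) * ((n:ℝ) * |c p0 ^ (1/α) - c (p0-ε) ^ (1/α)| / D)
          ≤ (1 - d/2) * ((n:ℝ) * |c p0 ^ (1/α) - c (p0-ε) ^ (1/α)| / D) := by
            apply mul_le_mul_of_nonneg_right _ hQ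
            linarith
        _ = (1 - d/2) * |t1 - t2| := by rw [ht12]
        _ ≤ E1 + E2 := hlow
    calc ((1 - ε * K) / 2) * ((n:ℝ)/2) * |c p0 ^ (1/α) - c (p0-ε) ^ (1/α)| / D
        = (1 - ε*K) * ((n:ℝ) * |c p0 ^ (1/α) - c (p0-ε) ^ (1/α)| / D) / 4 := by
          ring
      _ ≤ (E1 + E2) / 4 := by linarith
      _ ≤ (E1 + E2) / 2 := by
          have h1 : 0 ≤ E1 := hED θ1 hθ1b 0 t1
          have h2 : 0 ≤ E2 := hED θ2 hθ2b 0 t2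
          linarith
end

section
/- Let f : [0,∞) → ℝ be bounded on compact subsets of [0,∞), with f(1) = 0, and suppose f is real analytic on (0,2) with Taylor expansion f(x) = Σ_{m≥0} a_m (x − 1)^m valid for x ∈ (0,2), where a_m = f^{(m)}(1)/m! and sup_{m≥1} |a_m| ≤ C_1 < ∞. Fix an integer r ≥ 1 and p ∈ (0,1). Let p̂ be the empirical mean of T ≥ 1 i.i.d. Bernoulli(p) random variables, and define the Taylor remainder R_{r+1} = p·f(p̂/p) − Σ_{m=0}^r a_m (p̂ − p)^m / p^{m−1}. Then there exists a finite constant C, depending only on f, r, and p, such that E[ R_{r+1} ] ≤ C · T^{−(r+1)/2}; in particular the bound can be taken of the form C = C_{f,r+1}·p^{−(r+1)/2} so that E[R_{r+1}] ≤ C_{f,r+1} (pT)^{−(r+1)/2}. -/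
open MeasureTheory Finset


lemma aux_meas_comp {Ω : Type} [MeasurableSpace Ω] {g : Ω → ℝ}
    (hg : Measurable g) (hc : (Set.range g).Countable) (h : ℝ → ℝ) :
    Measurable fun ω => h (g ω) := by
  have key : ∀ A : Set ℝ, MeasurableSet (g ⁻¹' A) := by
    intro A
    have hEq : g ⁻¹' A = ⋃ x ∈ (A ∩ Set.range g), g ⁻¹' {x} := by
      ext ω
      simp only [Set.mem_preimage, Set.mem_iUnion, Set.mem_inter_iff, Set.mem_range,
        Set.mem_singleton_iff]
      constructor
      · intro hA; exact ⟨g ω, ⟨hA, ⟨ω, rfl⟩⟩, rfl⟩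
      · rintro ⟨x, ⟨hx, _⟩, hgx⟩; rw [hgx]; exact hx
    rw [hEq]
    exact MeasurableSet.biUnion (hc.mono Set.inter_subset_right)
      fun x _ => hg (measurableSet_singleton x)
  intro s _
  exact key (h ⁻¹' s)

lemma aux_tail_bound (a : ℕ → ℝ) (C1 : ℝ) (hC1 : ∀ m : ℕ, 1 ≤ m → |a m| ≤ C1)
    (r : ℕ) (x : ℝ) (hx : |x - 1| ≤ 1/2) (fx : ℝ)
    (h : HasSum (fun m => a m * (x - 1) ^ m) fx) :
    |fx - ∑ m ∈ Finset.range (r + 1), a m * (x - 1) ^ m| ≤ 2 * C1 * |x - 1| ^ (r + 1) := by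
  have hC10 : 0 ≤ C1 := (abs_nonneg _).trans (hC1 1 le_rfl)
  have hu0 : (0:ℝ) ≤ |x - 1| := abs_nonneg _
  have tail : HasSum (fun m => a (m + (r + 1)) * (x - 1) ^ (m + (r + 1)))
      (fx - ∑ m ∈ Finset.range (r + 1), a m * (x - 1) ^ m) := by
    refine (hasSum_nat_add_iff (f := fun m => a m * (x - 1) ^ m) (r + 1)).mpr ?_
    rw [sub_add_cancel]
    exact h
  have hbd : ∀ m : ℕ, |a (m + (r + 1)) * (x - 1) ^ (m + (r + 1))|
      ≤ C1 * |x - 1| ^ (r + 1) * (1/2) ^ m := by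
    intro m
    rw [abs_mul, abs_pow]
    have h1 : |a (m + (r + 1))| ≤ C1 := hC1 _ (by omega)
    have h2 : |x - 1| ^ (m + (r + 1)) ≤ |x - 1| ^ (r + 1) * (1/2) ^ m := by
      rw [add_comm m (r+1), pow_add]
      exact mul_le_mul_of_nonneg_left (pow_le_pow_left₀ hu0 hx m) (pow_nonneg hu0 _)
    calc |a (m + (r + 1))| * |x - 1| ^ (m + (r + 1))
        ≤ C1 * (|x - 1| ^ (r + 1) * (1/2) ^ m) :=
          mul_le_mul h1 h2 (pow_nonneg hu0 _) hC10
      _ = C1 * |x - 1| ^ (r + 1) * (1/2) ^ m := by ring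
  have hsum_big : Summable (fun m : ℕ => C1 * |x - 1| ^ (r + 1) * (1/2) ^ m) :=
    (summable_geometric_of_lt_one (by norm_num) (by norm_num)).mul_left _
  have hsum_abs : Summable (fun m : ℕ => |a (m + (r + 1)) * (x - 1) ^ (m + (r + 1))|) :=
    Summable.of_nonneg_of_le (fun m => abs_nonneg _) hbd hsum_big
  have h1 : |fx - ∑ m ∈ Finset.range (r + 1), a m * (x - 1) ^ m|
      ≤ ∑' m : ℕ, |a (m + (r + 1)) * (x - 1) ^ (m + (r + 1))| := by
    rw [← tail.tsum_eq]
    exact norm_tsum_le_tsum_norm (f := fun m => a (m + (r + 1)) * (x - 1) ^ (m + (r + 1)))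
      hsum_abs
  have h2 : (∑' m : ℕ, |a (m + (r + 1)) * (x - 1) ^ (m + (r + 1))|)
      ≤ ∑' m : ℕ, C1 * |x - 1| ^ (r + 1) * (1/2) ^ m := Summable.tsum_le_tsum hbd hsum_abs hsum_big
  have h3 : (∑' m : ℕ, C1 * |x - 1| ^ (r + 1) * (1/2) ^ m) = 2 * C1 * |x - 1| ^ (r + 1) := by
    rw [tsum_mul_left, tsum_geometric_of_lt_one (by norm_num) (by norm_num)]
    ring
  calc |fx - ∑ m ∈ Finset.range (r + 1), a m * (x - 1) ^ m| ≤ _ := h1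
    _ ≤ _ := h2
    _ = 2 * C1 * |x - 1| ^ (r + 1) := h3


lemma aux_moment {Ω : Type} [MeasurableSpace Ω] (μ : Measure Ω) [IsProbabilityMeasure μ]
    (Y : ℕ → Ω → ℝ) (hmeas : ∀ s, Measurable (Y s))
    (hindep : ProbabilityTheory.iIndepFun Y μ)
    (hb : ∀ s ω, |Y s ω| ≤ 1) (hc : ∀ s, ∫ ω, Y s ω ∂μ = 0) :
    ∀ n : ℕ, ∀ m ≤ n, ∀ T : ℕ,
      |∫ ω, (∑ s ∈ Finset.Icc 1 T, Y s ω) ^ m ∂μ|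
        ≤ (2:ℝ) ^ (n * n) * ((T:ℝ) + 1) ^ (m / 2) := by
  -- basic facts
  have hAmeas : ∀ T : ℕ, Measurable (fun ω => ∑ s ∈ Finset.Icc 1 T, Y s ω) :=
    fun T => Finset.measurable_sum _ (fun s _ => hmeas s)
  have hAbd : ∀ (T : ℕ) ω, |∑ s ∈ Finset.Icc 1 T, Y s ω| ≤ (T:ℝ) := by
    intro T ω
    calc |∑ s ∈ Finset.Icc 1 T, Y s ω| ≤ ∑ s ∈ Finset.Icc 1 T, |Y s ω| :=
          Finset.abs_sum_le_sum_abs _ _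
      _ ≤ ∑ s ∈ Finset.Icc 1 T, 1 := Finset.sum_le_sum (fun s _ => hb s ω)
      _ = (T:ℝ) := by simp [Nat.card_Icc]
  have hint : ∀ (g : Ω → ℝ) (c : ℝ), Measurable g → (∀ ω, |g ω| ≤ c) → Integrable g μ := by
    intro g c hg hgc
    exact (integrable_const c).mono' hg.aestronglyMeasurable
      (Filter.Eventually.of_forall (by simpa [Real.norm_eq_abs] using hgc))
  have hYj : ∀ (s j : ℕ), |∫ ω, (Y s ω) ^ j ∂μ| ≤ 1 := by
    intro s j
    have := norm_integral_le_of_norm_le_const (μ := μ) (f := fun ω => (Y s ω) ^ j) (C := 1)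
      (Filter.Eventually.of_forall (fun ω => by
        rw [Real.norm_eq_abs, abs_pow]
        exact pow_le_one₀ (abs_nonneg _) (hb s ω)))
    simpa [Real.norm_eq_abs] using this
  intro n
  induction n with
  | zero =>
    intro m hm T
    interval_cases m
    simp
  | succ n ihn =>
    intro m hm T
    rcases Nat.lt_or_ge m (n+1) with hmn | hge
    · -- m ≤ n : use previous constant, enlarge
      have h1 := ihn m (by omega) T
      refine h1.trans ?_
      have hTpos : (0:ℝ) ≤ ((T:ℝ) + 1) ^ (m / 2) := by positivity
      have : (2:ℝ) ^ (n * n) ≤ (2:ℝ) ^ ((n+1) * (n+1)) :=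
        pow_le_pow_right₀ (by norm_num) (by nlinarith)
      exact mul_le_mul_of_nonneg_right this hTpos
    · -- m = n + 1
      have hmeq : m = n + 1 := le_antisymm hm hge
      subst hmeq
      rcases Nat.eq_zero_or_pos n with hn0 | hn1
      · -- m = 1 : centered
        subst hn0
        have hInteq : ∫ ω, (∑ s ∈ Finset.Icc 1 T, Y s ω) ^ 1 ∂μ = 0 := by
          simp only [pow_one]
          rw [integral_finset_sum _ (fun s _ => hint (Y s) 1 (hmeas s) (hb s))]
          simp [hc]
        rw [hInteq]
        simp only [abs_zero]
        positivity
      · -- m ≥ 2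
        set m := n + 1 with hm_def
        have hm2 : 2 ≤ m := by omega
        have hk1 : 1 ≤ m / 2 := by omega
        set D : ℝ := (2:ℝ) ^ (n * n) * 2 ^ m with hD
        have hD0 : 0 ≤ D := by positivity
        have key : ∀ T : ℕ, |∫ ω, (∑ s ∈ Finset.Icc 1 T, Y s ω) ^ m ∂μ|
            ≤ D * ((T:ℝ) + 1) ^ (m / 2) := by
          intro T
          induction T with
          | zero =>
            have h0 : (∫ ω, (∑ s ∈ Finset.Icc 1 0, Y s ω) ^ m ∂μ) = 0 := by
              have hz : ∀ ω, (∑ s ∈ Finset.Icc 1 0, Y s ω) ^ m = (0:ℝ) := by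
                intro ω
                rw [show Finset.Icc 1 0 = (∅ : Finset ℕ) from rfl, Finset.sum_empty,
                  zero_pow (by omega)]
              simp_rw [hz]
              exact integral_zero _ _
            rw [h0]
            simp only [abs_zero]
            positivity
          | succ T ihT =>
            -- expansion
            have hsplit : ∀ ω, ∑ s ∈ Finset.Icc 1 (T+1), Y s ω
                = (∑ s ∈ Finset.Icc 1 T, Y s ω) + Y (T+1) ω := by
              intro ω
              exact Finset.sum_Icc_succ_top (by omega) _
            have heqfun : (fun ω => ∑ s ∈ Finset.Icc 1 T, Y s ω)
                = ∑ s ∈ Finset.Icc 1 T, Y s := by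
              ext ω; simp [Finset.sum_apply]
            have hIndep : ProbabilityTheory.IndepFun
                (fun ω => ∑ s ∈ Finset.Icc 1 T, Y s ω) (Y (T+1)) μ := by
              rw [heqfun]
              exact hindep.indepFun_finset_sum_of_notMem hmeas (by simp)
            have hIndepPow : ∀ j k : ℕ, ProbabilityTheory.IndepFun
                (fun ω => (∑ s ∈ Finset.Icc 1 T, Y s ω) ^ j)
                (fun ω => (Y (T+1) ω) ^ k) μ := by
              intro j k
              exact hIndep.comp (measurable_id.pow_const j) (measurable_id.pow_const k)
            have hmul : ∀ j k : ℕ,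
                ∫ ω, (∑ s ∈ Finset.Icc 1 T, Y s ω) ^ j * (Y (T+1) ω) ^ k ∂μ
                  = (∫ ω, (∑ s ∈ Finset.Icc 1 T, Y s ω) ^ j ∂μ)
                    * ∫ ω, (Y (T+1) ω) ^ k ∂μ := by
              intro j k
              exact (hIndepPow j k).integral_mul_eq_mul_integral
                ((hAmeas T).pow_const j).aestronglyMeasurable
                ((hmeas _).pow_const k).aestronglyMeasurable
            have hterm_int : ∀ j ∈ Finset.range (m+1), Integrable
                (fun ω => (∑ s ∈ Finset.Icc 1 T, Y s ω) ^ j * (Y (T+1) ω) ^ (m - j)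
                  * (m.choose j : ℝ)) μ := by
              intro j _
              refine hint _ ((T:ℝ)^j * 1 * (m.choose j : ℝ)) ?_ ?_
              · exact (((hAmeas T).pow_const j).mul ((hmeas _).pow_const _)).mul_const _
              · intro ω
                rw [abs_mul, abs_mul, abs_pow, abs_pow, Nat.abs_cast]
                refine mul_le_mul_of_nonneg_right ?_ (Nat.cast_nonneg _)
                refine mul_le_mul ?_ ?_ (by positivity) (by positivity)
                · exact pow_le_pow_left₀ (abs_nonneg _) (hAbd T ω) j
                · exact pow_le_one₀ (abs_nonneg _) (hb _ ω)
            have hExpand : ∫ ω, (∑ s ∈ Finset.Icc 1 (T+1), Y s ω) ^ m ∂μ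
                = (∑ j ∈ Finset.range m,
                    (∫ ω, (∑ s ∈ Finset.Icc 1 T, Y s ω) ^ j ∂μ)
                      * (∫ ω, (Y (T+1) ω) ^ (m - j) ∂μ) * (m.choose j : ℝ))
                  + ∫ ω, (∑ s ∈ Finset.Icc 1 T, Y s ω) ^ m ∂μ := by
              have h1 : ∀ ω, (∑ s ∈ Finset.Icc 1 (T+1), Y s ω) ^ m
                  = ∑ j ∈ Finset.range (m+1),
                      (∑ s ∈ Finset.Icc 1 T, Y s ω) ^ j * (Y (T+1) ω) ^ (m - j)
                        * (m.choose j : ℝ) := by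
                intro ω
                rw [hsplit ω, add_pow]
              simp_rw [h1]
              rw [integral_finset_sum _ hterm_int, Finset.sum_range_succ]
              congr 1
              · refine Finset.sum_congr rfl (fun j _ => ?_)
                rw [integral_mul_const, hmul j (m - j)]
              · simp [integral_mul_const, Nat.choose_self]
            rw [hExpand]
            have hbd_sum : |∑ j ∈ Finset.range m,
                (∫ ω, (∑ s ∈ Finset.Icc 1 T, Y s ω) ^ j ∂μ)
                  * (∫ ω, (Y (T+1) ω) ^ (m - j) ∂μ) * (m.choose j : ℝ)|
                ≤ (2:ℝ) ^ (n * n) * 2 ^ m * ((T:ℝ) + 1) ^ (m / 2 - 1) := by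
              calc |∑ j ∈ Finset.range m, _| ≤ ∑ j ∈ Finset.range m,
                    |(∫ ω, (∑ s ∈ Finset.Icc 1 T, Y s ω) ^ j ∂μ)
                      * (∫ ω, (Y (T+1) ω) ^ (m - j) ∂μ) * (m.choose j : ℝ)| :=
                    Finset.abs_sum_le_sum_abs _ _
                _ ≤ ∑ j ∈ Finset.range m,
                      (m.choose j : ℝ) * ((2:ℝ) ^ (n * n) * ((T:ℝ) + 1) ^ (m / 2 - 1)) := by
                    refine Finset.sum_le_sum (fun j hj => ?_)
                    rw [abs_mul, abs_mul, Nat.abs_cast]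
                    by_cases hjm : j = m - 1
                    · -- centered term vanishes
                      have hz : ∫ ω, (Y (T+1) ω) ^ (m - j) ∂μ = 0 := by
                        have h1 : m - j = 1 := by omega
                        rw [h1]
                        simpa using hc (T+1)
                      rw [hz, abs_zero, mul_zero, zero_mul]
                      positivity
                    · have hj2 : j ≤ m - 2 := by
                        have := Finset.mem_range.mp hj; omega
                      have hdiv : j / 2 ≤ m / 2 - 1 := by omega
                      have h1 : |∫ ω, (∑ s ∈ Finset.Icc 1 T, Y s ω) ^ j ∂μ|
                          ≤ (2:ℝ) ^ (n * n) * ((T:ℝ) + 1) ^ (m / 2 - 1) := by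
                        refine (ihn j (by omega) T).trans ?_
                        refine mul_le_mul_of_nonneg_left ?_ (by positivity)
                        exact pow_le_pow_right₀ (by linarith [Nat.cast_nonneg (α := ℝ) T]) hdiv
                      calc |∫ ω, (∑ s ∈ Finset.Icc 1 T, Y s ω) ^ j ∂μ|
                            * |∫ ω, (Y (T+1) ω) ^ (m - j) ∂μ| * (m.choose j : ℝ)
                          ≤ ((2:ℝ) ^ (n * n) * ((T:ℝ) + 1) ^ (m / 2 - 1)) * 1
                              * (m.choose j : ℝ) := by
                            refine mul_le_mul_of_nonneg_right
                              (mul_le_mul h1 (hYj _ _) (abs_nonneg _) (by positivity))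
                              (Nat.cast_nonneg _)
                        _ = (m.choose j : ℝ)
                              * ((2:ℝ) ^ (n * n) * ((T:ℝ) + 1) ^ (m / 2 - 1)) := by ring
                _ ≤ (2:ℝ) ^ m * ((2:ℝ) ^ (n * n) * ((T:ℝ) + 1) ^ (m / 2 - 1)) := by
                    rw [← Finset.sum_mul]
                    refine mul_le_mul_of_nonneg_right ?_ (by positivity)
                    have h2 : ∑ j ∈ Finset.range m, (m.choose j : ℝ)
                        ≤ ∑ j ∈ Finset.range (m+1), (m.choose j : ℝ) := by
                      refine Finset.sum_le_sum_of_subset_of_nonneg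
                        (Finset.range_subset_range.mpr (by omega))
                        (fun _ _ _ => Nat.cast_nonneg _)
                    refine h2.trans ?_
                    rw [← Nat.cast_sum]
                    rw [Nat.sum_range_choose]
                    simp [Nat.cast_pow]
                _ = (2:ℝ) ^ (n * n) * 2 ^ m * ((T:ℝ) + 1) ^ (m / 2 - 1) := by ring
            -- combine with induction hypothesis on T
            have hstep : |(∑ j ∈ Finset.range m,
                (∫ ω, (∑ s ∈ Finset.Icc 1 T, Y s ω) ^ j ∂μ)
                  * (∫ ω, (Y (T+1) ω) ^ (m - j) ∂μ) * (m.choose j : ℝ))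
                + ∫ ω, (∑ s ∈ Finset.Icc 1 T, Y s ω) ^ m ∂μ|
                ≤ D * ((T:ℝ) + 1) ^ (m / 2) + D * ((T:ℝ) + 1) ^ (m / 2 - 1) := by
              refine (abs_add_le _ _).trans ?_
              rw [add_comm (D * ((T:ℝ) + 1) ^ (m / 2))]
              refine add_le_add (hbd_sum.trans ?_) ihT
              exact le_refl _
            refine hstep.trans ?_
            -- (x+1)^k ≥ x^k + x^(k-1) for x ≥ 1
            have hx1 : (1:ℝ) ≤ (T:ℝ) + 1 := by linarith [Nat.cast_nonneg (α := ℝ) T]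
            have hx0 : (0:ℝ) ≤ (T:ℝ) + 1 := by linarith
            obtain ⟨k, hk⟩ : ∃ k, m / 2 = k + 1 := ⟨m / 2 - 1, by omega⟩
            have hk' : m / 2 - 1 = k := by omega
            rw [hk', hk] at *
            have hpow : ((T:ℝ) + 1) ^ (k + 1) + ((T:ℝ) + 1) ^ k
                ≤ ((T:ℝ) + 2) ^ (k + 1) := by
              calc ((T:ℝ) + 1) ^ (k + 1) + ((T:ℝ) + 1) ^ k
                  = ((T:ℝ) + 1) ^ k * (((T:ℝ) + 1) + 1) := by ring
                _ ≤ ((T:ℝ) + 2) ^ k * ((T:ℝ) + 2) := by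
                    refine mul_le_mul (pow_le_pow_left₀ hx0 (by linarith) _)
                      (by linarith) (by linarith) (by positivity)
                _ = ((T:ℝ) + 2) ^ (k + 1) := by ring
            calc D * ((T:ℝ) + 1) ^ (k + 1) + D * ((T:ℝ) + 1) ^ k
                = D * (((T:ℝ) + 1) ^ (k + 1) + ((T:ℝ) + 1) ^ k) := by ring
              _ ≤ D * ((T:ℝ) + 2) ^ (k + 1) := mul_le_mul_of_nonneg_left hpow hD0
              _ = D * ((((T+1):ℕ):ℝ) + 1) ^ (k + 1) := by push_cast; ring
        refine (key T).trans ?_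
        refine mul_le_mul_of_nonneg_right ?_ (by positivity)
        rw [hD]
        calc (2:ℝ) ^ (n * n) * 2 ^ m = (2:ℝ) ^ (n * n + m) := (pow_add 2 (n*n) m).symm
          _ ≤ (2:ℝ) ^ (m * m) :=
            pow_le_pow_right₀ (by norm_num) (by nlinarith [hm_def])

set_option maxHeartbeats 1000000 in
/-- Expected Taylor remainder bound for `f`-divergences.  If `f`
is bounded on compacts of `[0,∞)`, vanishes at `1`, and is real analytic on
`(0,2)` with Taylor coefficients `a_m = f^{(m)}(1)/m!` satisfying
`sup_{m≥1} |a_m| ≤ C₁`, then for fixed `r ≥ 1` and `p ∈ (0,1)` there is a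
constant `C_{f,r+1}` (independent of `T`) such that, with `p̂` the empirical
mean of `T` i.i.d. Bernoulli(`p`) variables and
`R_{r+1} = p f(p̂/p) − Σ_{m=0}^r a_m (p̂−p)^m / p^{m−1}`, one has
`E[R_{r+1}] ≤ C_{f,r+1} (pT)^{−(r+1)/2}`. -/
theorem f_divergence_remainder_bound
    (f : ℝ → ℝ)
    (hbound : ∀ s : Set ℝ, s ⊆ Set.Ici (0 : ℝ) → IsCompact s → ∃ M, ∀ x ∈ s, |f x| ≤ M)
    (hf1 : f 1 = 0)
    (hanalytic : AnalyticOnNhd ℝ f (Set.Ioo (0 : ℝ) 2))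
    (a : ℕ → ℝ) (ha : ∀ m, a m = iteratedDeriv m f 1 / m.factorial)
    (hTaylor : ∀ x ∈ Set.Ioo (0 : ℝ) 2, HasSum (fun m => a m * (x - 1) ^ m) (f x))
    (C1 : ℝ) (hC1 : ∀ m : ℕ, 1 ≤ m → |a m| ≤ C1)
    (r : ℕ) (hr : 1 ≤ r) (p : ℝ) (hp : p ∈ Set.Ioo (0 : ℝ) 1) :
    ∃ C : ℝ, ∀ T : ℕ, 1 ≤ T →
      ∀ (Ω : Type) [MeasurableSpace Ω] (μ : Measure Ω), IsProbabilityMeasure μ →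
      ∀ Z : ℕ → Ω → ℝ, (∀ s, Measurable (Z s)) →
        ProbabilityTheory.iIndepFun Z μ →
        (∀ s, μ {ω | Z s ω = 1} = ENNReal.ofReal p) →
        (∀ s ω, Z s ω = 0 ∨ Z s ω = 1) →
        ∫ ω, (p * f (((∑ s ∈ Finset.Icc 1 T, Z s ω) / T) / p)
              - ∑ m ∈ Finset.range (r + 1),
                  a m * ((∑ s ∈ Finset.Icc 1 T, Z s ω) / T - p) ^ m / p ^ ((m : ℤ) - 1)) ∂μ
          ≤ C * (p * T) ^ (-(((r : ℝ) + 1) / 2)) := by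
  have hp0 : 0 < p := hp.1
  have hp1 : p < 1 := hp.2
  have hpinv1 : (1:ℝ) ≤ p⁻¹ := by
    rw [le_inv_comm₀ one_pos hp0]
    simpa using hp1.le
  have hC10 : 0 ≤ C1 := (abs_nonneg _).trans (hC1 1 le_rfl)
  -- bound of f on [0, p⁻¹]
  obtain ⟨M, hM⟩ := hbound (Set.Icc 0 p⁻¹) (fun x hx => hx.1) isCompact_Icc
  have hM0 : 0 ≤ M := (abs_nonneg _).trans (hM 1 ⟨zero_le_one, hpinv1⟩)
  -- constants
  set Kc : ℝ := (2:ℝ) ^ ((2*r+2) * (2*r+2)) with hKc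
  have hKc0 : 0 < Kc := by positivity
  set B : ℝ := p * M + (∑ m ∈ Finset.range (r+1), |a m|) / p ^ r with hB
  have hB0 : 0 ≤ B := by positivity
  set c0 : ℝ := 2*C1/p^r + 2*C1/p^r * (Kc * 2^(r+1))
      + B * 4^(r+1)/p^(2*r+2) * (Kc * 2^(r+1)) with hc0
  refine ⟨c0 * p ^ (((r:ℝ)+1)/2), ?_⟩
  intro T hT Ω _ μ hμ Z hZmeas hZindep hZp hZ01
  haveI := hμ
  have hT0 : (0:ℝ) < T := by exact_mod_cast Nat.pos_of_ne_zero (by omega)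
  have hT1 : (1:ℝ) ≤ T := by exact_mod_cast hT
  -- basic facts about Z
  have hZ01' : ∀ s ω, 0 ≤ Z s ω ∧ Z s ω ≤ 1 := by
    intro s ω; rcases hZ01 s ω with h | h <;> rw [h] <;> norm_num
  have hSbd : ∀ ω, 0 ≤ (∑ s ∈ Finset.Icc 1 T, Z s ω)
      ∧ (∑ s ∈ Finset.Icc 1 T, Z s ω) ≤ T := by
    intro ω
    constructor
    · exact Finset.sum_nonneg (fun s _ => (hZ01' s ω).1)
    · calc (∑ s ∈ Finset.Icc 1 T, Z s ω) ≤ ∑ s ∈ Finset.Icc 1 T, 1 :=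
            Finset.sum_le_sum (fun s _ => (hZ01' s ω).2)
        _ = (T:ℝ) := by simp [Nat.card_Icc]
  have hSmeas : Measurable (fun ω => ∑ s ∈ Finset.Icc 1 T, Z s ω) :=
    Finset.measurable_sum _ (fun s _ => hZmeas s)
  -- integral of Z s is p
  have hZint : ∀ s, ∫ ω, Z s ω ∂μ = p := by
    intro s
    have hE : MeasurableSet {ω | Z s ω = 1} := hZmeas s (measurableSet_singleton 1)
    have heq : (fun ω => Z s ω) = Set.indicator {ω | Z s ω = 1} (fun _ => (1:ℝ)) := by
      funext ω
      rcases hZ01 s ω with h | h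
      · rw [h, Set.indicator_of_notMem]
        intro hmem
        simp only [Set.mem_setOf_eq] at hmem
        rw [h] at hmem; norm_num at hmem
      · rw [h, Set.indicator_of_mem]
        exact h
    rw [heq, integral_indicator_const (1:ℝ) hE, measureReal_def, hZp s, smul_eq_mul, mul_one,
      ENNReal.toReal_ofReal hp0.le]
  -- centered variables
  set Y : ℕ → Ω → ℝ := fun s ω => Z s ω - p with hY
  have hYmeas : ∀ s, Measurable (Y s) := fun s => (hZmeas s).sub_const p
  have hYindep : ProbabilityTheory.iIndepFun Y μ :=
    hZindep.comp (fun _ x => x - p) (fun _ => measurable_id.sub_const p)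
  have hYb : ∀ s ω, |Y s ω| ≤ 1 := by
    intro s ω
    rw [abs_le]
    constructor
    · simp only [hY]; linarith [(hZ01' s ω).1]
    · simp only [hY]; linarith [(hZ01' s ω).2]
  have hYint : ∀ s, Integrable (Y s) μ := by
    intro s
    refine (integrable_const (1:ℝ)).mono' (hYmeas s).aestronglyMeasurable ?_
    exact Filter.Eventually.of_forall (fun ω => by simpa [Real.norm_eq_abs] using hYb s ω)
  have hYc : ∀ s, ∫ ω, Y s ω ∂μ = 0 := by
    intro s
    simp only [hY]
    rw [integral_sub (by
        refine (integrable_const (1:ℝ)).mono' (hZmeas s).aestronglyMeasurable ?_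
        exact Filter.Eventually.of_forall (fun ω => by
          rw [Real.norm_eq_abs, abs_of_nonneg (hZ01' s ω).1]; exact (hZ01' s ω).2))
      (integrable_const p), hZint s, integral_const]
    simp
  -- moment bound
  have hmom := aux_moment μ Y hYmeas hYindep hYb hYc (2*r+2) (2*r+2) le_rfl T
  -- relation X = A / T
  have hXA : ∀ ω, (∑ s ∈ Finset.Icc 1 T, Z s ω) / T - p
      = (∑ s ∈ Finset.Icc 1 T, Y s ω) / T := by
    intro ω
    simp only [hY]
    rw [Finset.sum_sub_distrib, Finset.sum_const, Nat.card_Icc]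
    simp only [Nat.add_sub_cancel, nsmul_eq_mul]
    field_simp
  have hXbd : ∀ ω, |(∑ s ∈ Finset.Icc 1 T, Z s ω) / T - p| ≤ 1 := by
    intro ω
    have h1 : 0 ≤ (∑ s ∈ Finset.Icc 1 T, Z s ω) / T := div_nonneg (hSbd ω).1 hT0.le
    have h2 : (∑ s ∈ Finset.Icc 1 T, Z s ω) / T ≤ 1 := by
      rw [div_le_one hT0]; exact (hSbd ω).2
    rw [abs_le]; constructor <;> nlinarith
  -- expectation of X^(2r+2)
  have hEX : ∫ ω, ((∑ s ∈ Finset.Icc 1 T, Z s ω) / T - p) ^ (2*r+2) ∂μ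
      ≤ Kc * 2^(r+1) / (T:ℝ)^(r+1) := by
    have heq : (fun ω => ((∑ s ∈ Finset.Icc 1 T, Z s ω) / T - p) ^ (2*r+2))
        = fun ω => ((∑ s ∈ Finset.Icc 1 T, Y s ω) ^ (2*r+2)) / ((T:ℝ)^(2*r+2)) := by
      funext ω
      rw [hXA ω, div_pow]
    rw [show (∫ ω, ((∑ s ∈ Finset.Icc 1 T, Z s ω) / T - p) ^ (2*r+2) ∂μ)
        = ∫ ω, ((∑ s ∈ Finset.Icc 1 T, Y s ω) ^ (2*r+2)) / ((T:ℝ)^(2*r+2)) ∂μ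
      from by rw [← heq], integral_div]
    have h1 : (∫ ω, (∑ s ∈ Finset.Icc 1 T, Y s ω) ^ (2*r+2) ∂μ)
        ≤ Kc * ((T:ℝ)+1)^(r+1) := by
      refine (le_abs_self _).trans ?_
      have h2 := hmom
      rw [show (2*r+2)/2 = r+1 from by omega] at h2
      exact h2
    calc (∫ ω, (∑ s ∈ Finset.Icc 1 T, Y s ω) ^ (2*r+2) ∂μ) / ((T:ℝ)^(2*r+2))
        ≤ (Kc * ((T:ℝ)+1)^(r+1)) / ((T:ℝ)^(2*r+2)) := by gcongr
      _ ≤ (Kc * (2^(r+1) * (T:ℝ)^(r+1))) / ((T:ℝ)^(2*r+2)) := by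
          gcongr
          calc ((T:ℝ)+1)^(r+1) ≤ (2*(T:ℝ))^(r+1) :=
                pow_le_pow_left₀ (by linarith) (by linarith) _
            _ = 2^(r+1) * (T:ℝ)^(r+1) := mul_pow _ _ _
      _ = Kc * 2^(r+1) / (T:ℝ)^(r+1) := by
          rw [show 2*r+2 = (r+1)+(r+1) from by omega, pow_add]
          field_simp
          ring
  -- sqrt quantities
  set w : ℝ := (Real.sqrt T) ^ (r+1) with hw
  have hsq0 : 0 < Real.sqrt T := Real.sqrt_pos.mpr hT0
  have hw0 : 0 < w := pow_pos hsq0 _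
  have hww : w * w = (T:ℝ)^(r+1) := by
    rw [hw, ← mul_pow, Real.mul_self_sqrt hT0.le]
  have hwT : w ≤ (T:ℝ)^(r+1) := by
    rw [hw]
    refine pow_le_pow_left₀ hsq0.le ?_ _
    calc Real.sqrt T ≤ Real.sqrt ((T:ℝ)^2) := Real.sqrt_le_sqrt (by nlinarith)
      _ = (T:ℝ) := Real.sqrt_sq hT0.le
  -- pointwise bound for |G|
  have hGabs : ∀ ω, |p * f ((∑ s ∈ Finset.Icc 1 T, Z s ω) / T / p)
      - ∑ m ∈ Finset.range (r + 1),
          a m * ((∑ s ∈ Finset.Icc 1 T, Z s ω) / T - p) ^ m / p ^ ((m : ℤ) - 1)| ≤ B := by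
    intro ω
    have hx0 : 0 ≤ (∑ s ∈ Finset.Icc 1 T, Z s ω) / T / p :=
      div_nonneg (div_nonneg (hSbd ω).1 hT0.le) hp0.le
    have hx1 : (∑ s ∈ Finset.Icc 1 T, Z s ω) / T / p ≤ p⁻¹ := by
      rw [div_le_iff₀ hp0]
      have h2 : (∑ s ∈ Finset.Icc 1 T, Z s ω) / T ≤ 1 := by
        rw [div_le_one hT0]; exact (hSbd ω).2
      calc (∑ s ∈ Finset.Icc 1 T, Z s ω) / T ≤ 1 := h2
        _ = p⁻¹ * p := by field_simp
    have hfb : |f ((∑ s ∈ Finset.Icc 1 T, Z s ω) / T / p)| ≤ M := hM _ ⟨hx0, hx1⟩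
    refine (abs_sub _ _).trans ?_
    rw [hB]
    refine add_le_add ?_ ?_
    · rw [abs_mul, abs_of_pos hp0]
      exact mul_le_mul_of_nonneg_left hfb hp0.le
    · calc |∑ m ∈ Finset.range (r + 1),
            a m * ((∑ s ∈ Finset.Icc 1 T, Z s ω) / T - p) ^ m / p ^ ((m : ℤ) - 1)|
          ≤ ∑ m ∈ Finset.range (r + 1),
            |a m * ((∑ s ∈ Finset.Icc 1 T, Z s ω) / T - p) ^ m / p ^ ((m : ℤ) - 1)| :=
            Finset.abs_sum_le_sum_abs _ _
        _ ≤ ∑ m ∈ Finset.range (r + 1), |a m| / p ^ r := by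
            refine Finset.sum_le_sum (fun m hm => ?_)
            have hm_le : m ≤ r := by
              have := Finset.mem_range.mp hm; omega
            have hzpos : (0:ℝ) < p ^ ((m:ℤ) - 1) := zpow_pos hp0 _
            have hz : p ^ (r:ℤ) ≤ p ^ ((m:ℤ) - 1) :=
              zpow_le_zpow_right_of_le_one₀ hp0 hp1.le (by omega)
            rw [abs_div, abs_mul, abs_pow, abs_of_pos hzpos]
            have hnum : |a m| * |(∑ s ∈ Finset.Icc 1 T, Z s ω) / T - p| ^ m ≤ |a m| := by
              calc |a m| * |(∑ s ∈ Finset.Icc 1 T, Z s ω) / T - p| ^ m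
                  ≤ |a m| * 1 := by
                    refine mul_le_mul_of_nonneg_left ?_ (abs_nonneg _)
                    exact pow_le_one₀ (abs_nonneg _) (hXbd ω)
                _ = |a m| := mul_one _
            calc |a m| * |(∑ s ∈ Finset.Icc 1 T, Z s ω) / T - p| ^ m / p ^ ((m:ℤ) - 1)
                ≤ |a m| / p ^ (r:ℤ) :=
                  div_le_div₀ (abs_nonneg _) hnum (zpow_pos hp0 _) hz
              _ = |a m| / p ^ r := by rw [zpow_natCast]
        _ = (∑ m ∈ Finset.range (r+1), |a m|) / p ^ r := (Finset.sum_div _ _ _).symm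
  -- pointwise upper bound
  have hpt : ∀ ω, p * f ((∑ s ∈ Finset.Icc 1 T, Z s ω) / T / p)
      - ∑ m ∈ Finset.range (r + 1),
          a m * ((∑ s ∈ Finset.Icc 1 T, Z s ω) / T - p) ^ m / p ^ ((m : ℤ) - 1)
      ≤ 2*C1/p^r * w⁻¹ + (2*C1/p^r * w + B * 4^(r+1)/p^(2*r+2))
          * ((∑ s ∈ Finset.Icc 1 T, Z s ω) / T - p) ^ (2*r+2) := by
    intro ω
    set X : ℝ := (∑ s ∈ Finset.Icc 1 T, Z s ω) / T - p with hXdef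
    have hXeven : (0:ℝ) ≤ X ^ (2*r+2) := by
      rw [show 2*r+2 = 2*(r+1) from by ring, pow_mul]
      positivity
    by_cases hgood : |X| ≤ p / 2
    · -- good event : Taylor tail
      set x : ℝ := (∑ s ∈ Finset.Icc 1 T, Z s ω) / T / p with hxdef
      have hx1 : x - 1 = X / p := by
        rw [hxdef, hXdef]
        field_simp
      have habs : |x - 1| ≤ 1/2 := by
        rw [hx1, abs_div, abs_of_pos hp0, div_le_iff₀ hp0]
        linarith
      have hxIoo : x ∈ Set.Ioo (0:ℝ) 2 := by
        rcases abs_le.mp habs with ⟨hl, hu⟩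
        constructor <;> [linarith; linarith]
      have htail := aux_tail_bound a C1 hC1 r x habs (f x) (hTaylor x hxIoo)
      have hPsum : ∑ m ∈ Finset.range (r + 1), a m * X ^ m / p ^ ((m:ℤ) - 1)
          = p * ∑ m ∈ Finset.range (r + 1), a m * (x - 1) ^ m := by
        rw [Finset.mul_sum]
        refine Finset.sum_congr rfl (fun m _ => ?_)
        rw [hx1, div_pow]
        have hzp : p ^ ((m:ℤ) - 1) = p ^ m / p := by
          rw [zpow_sub₀ hp0.ne', zpow_natCast, zpow_one]
        rw [hzp]
        have hpm : (0:ℝ) < p ^ m := pow_pos hp0 m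
        field_simp
      have hGeq : p * f x - ∑ m ∈ Finset.range (r + 1), a m * X ^ m / p ^ ((m:ℤ) - 1)
          = p * (f x - ∑ m ∈ Finset.range (r + 1), a m * (x - 1) ^ m) := by
        rw [hPsum]; ring
      rw [hGeq]
      have h1 : p * (f x - ∑ m ∈ Finset.range (r + 1), a m * (x - 1) ^ m)
          ≤ p * (2 * C1 * |x - 1| ^ (r+1)) :=
        mul_le_mul_of_nonneg_left ((le_abs_self _).trans htail) hp0.le
      have h2 : p * (2 * C1 * |x - 1| ^ (r+1)) = 2 * C1 * |X| ^ (r+1) / p ^ r := by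
        rw [hx1, abs_div, abs_of_pos hp0, div_pow]
        rw [show r + 1 = r + 1 from rfl]
        have : (0:ℝ) < p ^ (r+1) := pow_pos hp0 _
        field_simp
        ring
      -- |X|^(r+1) ≤ w⁻¹ + X^(2r+2) * w
      have h3 : |X| ^ (r+1) ≤ w⁻¹ + X ^ (2*r+2) * w := by
        have hXp : X ^ (2*r+2) = (|X| ^ (r+1)) * (|X| ^ (r+1)) := by
          rw [← pow_add, ← abs_pow, abs_of_nonneg ?_]
          · congr 1; ring
          · rw [show r+1+(r+1) = 2*(r+1) from by ring, pow_mul]; positivity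
        by_cases hcase : |X| ≤ (Real.sqrt T)⁻¹
        · have : |X| ^ (r+1) ≤ ((Real.sqrt T)⁻¹) ^ (r+1) :=
            pow_le_pow_left₀ (abs_nonneg _) hcase _
          rw [inv_pow] at this
          calc |X| ^ (r+1) ≤ w⁻¹ := by rw [hw]; exact this
            _ ≤ w⁻¹ + X ^ (2*r+2) * w := by nlinarith [mul_nonneg hXeven hw0.le]
        · push_neg at hcase
          have h5 : w⁻¹ ≤ |X| ^ (r+1) := by
            rw [hw, ← inv_pow]
            exact pow_le_pow_left₀ (inv_nonneg.mpr hsq0.le) hcase.le _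
          have h6 : 1 ≤ |X| ^ (r+1) * w := by
            calc (1:ℝ) = w⁻¹ * w := by field_simp
              _ ≤ |X| ^ (r+1) * w := mul_le_mul_of_nonneg_right h5 hw0.le
          calc |X| ^ (r+1) = |X| ^ (r+1) * 1 := (mul_one _).symm
            _ ≤ |X| ^ (r+1) * (|X| ^ (r+1) * w) := by
                refine mul_le_mul_of_nonneg_left h6 (by positivity)
            _ = X ^ (2*r+2) * w := by rw [hXp]; ring
            _ ≤ w⁻¹ + X ^ (2*r+2) * w := le_add_of_nonneg_left (by positivity)
      calc p * (f x - ∑ m ∈ Finset.range (r + 1), a m * (x - 1) ^ m)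
          ≤ 2 * C1 * |X| ^ (r+1) / p ^ r := by rw [← h2]; exact h1
        _ = 2 * C1 / p ^ r * |X| ^ (r+1) := by ring
        _ ≤ 2 * C1 / p ^ r * (w⁻¹ + X ^ (2*r+2) * w) :=
            mul_le_mul_of_nonneg_left h3 (by positivity)
        _ = 2*C1/p^r * w⁻¹ + (2*C1/p^r * w) * X ^ (2*r+2) := by ring
        _ ≤ 2*C1/p^r * w⁻¹ + (2*C1/p^r * w + B * 4^(r+1)/p^(2*r+2)) * X ^ (2*r+2) := by
            refine add_le_add le_rfl ?_
            refine mul_le_mul_of_nonneg_right ?_ hXeven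
            have : (0:ℝ) ≤ B * 4^(r+1)/p^(2*r+2) := by positivity
            linarith
    · -- bad event
      push_neg at hgood
      have h1 : p * f ((∑ s ∈ Finset.Icc 1 T, Z s ω) / T / p)
          - ∑ m ∈ Finset.range (r + 1), a m * X ^ m / p ^ ((m:ℤ) - 1) ≤ B :=
        (le_abs_self _).trans (hGabs ω)
      have h2 : (1:ℝ) ≤ 4^(r+1) * X ^ (2*r+2) / p^(2*r+2) := by
        have hbase : (1:ℝ) ≤ 2 * |X| / p := by
          rw [le_div_iff₀ hp0]; linarith
        have h3 : (1:ℝ) ≤ (2 * |X| / p) ^ (2*r+2) := one_le_pow₀ hbase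
        calc (1:ℝ) ≤ (2 * |X| / p) ^ (2*r+2) := h3
          _ = 4^(r+1) * X ^ (2*r+2) / p^(2*r+2) := by
              rw [div_pow, mul_pow]
              congr 1
              · congr 1
                · rw [show 2*r+2 = 2*(r+1) from by ring, pow_mul]; norm_num
                · rw [← abs_pow, abs_of_nonneg hXeven]
      have h4 : B ≤ B * 4^(r+1)/p^(2*r+2) * X ^ (2*r+2) := by
        calc B = B * 1 := (mul_one _).symm
          _ ≤ B * (4^(r+1) * X ^ (2*r+2) / p^(2*r+2)) :=
              mul_le_mul_of_nonneg_left h2 hB0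
          _ = B * 4^(r+1)/p^(2*r+2) * X ^ (2*r+2) := by ring
      have h5 : (0:ℝ) ≤ 2*C1/p^r * w⁻¹ := by positivity
      have h6 : (0:ℝ) ≤ 2*C1/p^r * w * X ^ (2*r+2) := by positivity
      calc p * f ((∑ s ∈ Finset.Icc 1 T, Z s ω) / T / p)
          - ∑ m ∈ Finset.range (r + 1), a m * X ^ m / p ^ ((m:ℤ) - 1)
          ≤ B := h1
        _ ≤ B * 4^(r+1)/p^(2*r+2) * X ^ (2*r+2) := h4
        _ ≤ 2*C1/p^r * w⁻¹ + (2*C1/p^r * w + B * 4^(r+1)/p^(2*r+2)) * X ^ (2*r+2) := by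
            have h7 : (2*C1/p^r * w + B * 4^(r+1)/p^(2*r+2)) * X ^ (2*r+2)
                = 2*C1/p^r * w * X ^ (2*r+2) + B * 4^(r+1)/p^(2*r+2) * X ^ (2*r+2) := by
              ring
            rw [h7]
            linarith
  -- measurability and integrability of the integrand
  have hScount : (Set.range (fun ω => ∑ s ∈ Finset.Icc 1 T, Z s ω)).Countable := by
    have hnat : ∀ (F : Finset ℕ) ω, ∃ k : ℕ, ∑ s ∈ F, Z s ω = (k:ℝ) := by
      intro F ω
      induction F using Finset.induction with
      | empty => exact ⟨0, by simp⟩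
      | @insert s F hs ih =>
        obtain ⟨k, hk⟩ := ih
        rcases hZ01 s ω with h | h
        · exact ⟨k, by rw [Finset.sum_insert hs, h, hk]; simp⟩
        · exact ⟨k+1, by rw [Finset.sum_insert hs, h, hk]; push_cast; ring⟩
    have hsub : Set.range (fun ω => ∑ s ∈ Finset.Icc 1 T, Z s ω)
        ⊆ Set.range ((↑) : ℕ → ℝ) := by
      rintro x ⟨ω, rfl⟩
      obtain ⟨k, hk⟩ := hnat (Finset.Icc 1 T) ω
      exact ⟨k, hk.symm⟩
    exact (Set.countable_range _).mono hsub
  have hGmeas : Measurable (fun ω => p * f ((∑ s ∈ Finset.Icc 1 T, Z s ω) / T / p)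
      - ∑ m ∈ Finset.range (r + 1),
          a m * ((∑ s ∈ Finset.Icc 1 T, Z s ω) / T - p) ^ m / p ^ ((m : ℤ) - 1)) :=
    aux_meas_comp hSmeas hScount
      (fun x => p * f (x / T / p)
        - ∑ m ∈ Finset.range (r + 1), a m * (x / T - p) ^ m / p ^ ((m : ℤ) - 1))
  have hGint : Integrable (fun ω => p * f ((∑ s ∈ Finset.Icc 1 T, Z s ω) / T / p)
      - ∑ m ∈ Finset.range (r + 1),
          a m * ((∑ s ∈ Finset.Icc 1 T, Z s ω) / T - p) ^ m / p ^ ((m : ℤ) - 1)) μ := by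
    refine (integrable_const B).mono' hGmeas.aestronglyMeasurable ?_
    exact Filter.Eventually.of_forall (fun ω => by
      rw [Real.norm_eq_abs]; exact hGabs ω)
  have hXmeas : Measurable (fun ω => ((∑ s ∈ Finset.Icc 1 T, Z s ω) / T - p) ^ (2*r+2)) :=
    ((hSmeas.div_const _).sub_const p).pow_const _
  have hRint : Integrable (fun ω => 2*C1/p^r * w⁻¹
      + (2*C1/p^r * w + B * 4^(r+1)/p^(2*r+2))
        * ((∑ s ∈ Finset.Icc 1 T, Z s ω) / T - p) ^ (2*r+2)) μ := by
    refine Integrable.add (integrable_const _) ?_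
    refine Integrable.const_mul ?_ _
    refine (integrable_const (1:ℝ)).mono' hXmeas.aestronglyMeasurable ?_
    refine Filter.Eventually.of_forall (fun ω => ?_)
    rw [Real.norm_eq_abs, abs_pow]
    exact pow_le_one₀ (abs_nonneg _) (hXbd ω)
  -- integrate the pointwise bound
  have hInt1 : ∫ ω, (p * f ((∑ s ∈ Finset.Icc 1 T, Z s ω) / T / p)
      - ∑ m ∈ Finset.range (r + 1),
          a m * ((∑ s ∈ Finset.Icc 1 T, Z s ω) / T - p) ^ m / p ^ ((m : ℤ) - 1)) ∂μ
      ≤ ∫ ω, (2*C1/p^r * w⁻¹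
        + (2*C1/p^r * w + B * 4^(r+1)/p^(2*r+2))
          * ((∑ s ∈ Finset.Icc 1 T, Z s ω) / T - p) ^ (2*r+2)) ∂μ :=
    integral_mono hGint hRint hpt
  have hInt2 : ∫ ω, (2*C1/p^r * w⁻¹
      + (2*C1/p^r * w + B * 4^(r+1)/p^(2*r+2))
        * ((∑ s ∈ Finset.Icc 1 T, Z s ω) / T - p) ^ (2*r+2)) ∂μ
      = 2*C1/p^r * w⁻¹ + (2*C1/p^r * w + B * 4^(r+1)/p^(2*r+2))
        * ∫ ω, ((∑ s ∈ Finset.Icc 1 T, Z s ω) / T - p) ^ (2*r+2) ∂μ := by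
    rw [integral_add (integrable_const _)]
    · rw [integral_const, integral_const_mul]
      simp
    · refine Integrable.const_mul ?_ _
      refine (integrable_const (1:ℝ)).mono' hXmeas.aestronglyMeasurable ?_
      refine Filter.Eventually.of_forall (fun ω => ?_)
      rw [Real.norm_eq_abs, abs_pow]
      exact pow_le_one₀ (abs_nonneg _) (hXbd ω)
  -- final arithmetic
  have hc2pos : (0:ℝ) ≤ 2*C1/p^r * w + B * 4^(r+1)/p^(2*r+2) := by positivity
  have hfinal : 2*C1/p^r * w⁻¹ + (2*C1/p^r * w + B * 4^(r+1)/p^(2*r+2))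
      * (Kc * 2^(r+1) / (T:ℝ)^(r+1)) ≤ c0 * w⁻¹ := by
    have hTr : (0:ℝ) < (T:ℝ)^(r+1) := by positivity
    have h1 : w * (Kc * 2^(r+1) / (T:ℝ)^(r+1)) = Kc * 2^(r+1) * w⁻¹ := by
      rw [← hww]
      field_simp
    have h2 : Kc * 2^(r+1) / (T:ℝ)^(r+1) ≤ Kc * 2^(r+1) * w⁻¹ := by
      have hinv : ((T:ℝ)^(r+1))⁻¹ ≤ w⁻¹ := inv_anti₀ hw0 hwT
      rw [div_eq_mul_inv]
      exact mul_le_mul_of_nonneg_left hinv (by positivity)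
    calc 2*C1/p^r * w⁻¹ + (2*C1/p^r * w + B * 4^(r+1)/p^(2*r+2))
        * (Kc * 2^(r+1) / (T:ℝ)^(r+1))
        = 2*C1/p^r * w⁻¹ + 2*C1/p^r * (w * (Kc * 2^(r+1) / (T:ℝ)^(r+1)))
          + B * 4^(r+1)/p^(2*r+2) * (Kc * 2^(r+1) / (T:ℝ)^(r+1)) := by ring
      _ ≤ 2*C1/p^r * w⁻¹ + 2*C1/p^r * (Kc * 2^(r+1) * w⁻¹)
          + B * 4^(r+1)/p^(2*r+2) * (Kc * 2^(r+1) * w⁻¹) := by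
          rw [h1]
          refine add_le_add le_rfl ?_
          exact mul_le_mul_of_nonneg_left h2 (by positivity)
      _ = c0 * w⁻¹ := by rw [hc0]; ring
  -- rewrite the right-hand side
  have hRHSeq : c0 * p ^ (((r:ℝ)+1)/2) * (p * (T:ℝ)) ^ (-(((r:ℝ) + 1) / 2)) = c0 * w⁻¹ := by
    have hx : ((r:ℝ)+1)/2 = (1/2) * (((r+1:ℕ)):ℝ) := by push_cast; ring
    have hTw : ((T:ℝ)) ^ ((((r:ℝ)+1)/2) : ℝ) = w := by
      rw [hx, Real.rpow_mul (Nat.cast_nonneg T), Real.rpow_natCast, hw,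
        ← Real.sqrt_eq_rpow]
    have hmul : (p * (T:ℝ)) ^ (-(((r:ℝ) + 1) / 2))
        = p ^ (-(((r:ℝ) + 1) / 2)) * ((T:ℝ)) ^ (-(((r:ℝ) + 1) / 2)) :=
      Real.mul_rpow hp0.le (Nat.cast_nonneg T)
    rw [hmul, ← mul_assoc, mul_assoc c0 _ _, ← Real.rpow_add hp0]
    simp only [add_neg_cancel, Real.rpow_zero, mul_one]
    rw [Real.rpow_neg (Nat.cast_nonneg T), hTw]
  rw [hRHSeq]
  calc ∫ ω, (p * f ((∑ s ∈ Finset.Icc 1 T, Z s ω) / T / p)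
      - ∑ m ∈ Finset.range (r + 1),
          a m * ((∑ s ∈ Finset.Icc 1 T, Z s ω) / T - p) ^ m / p ^ ((m : ℤ) - 1)) ∂μ
      ≤ 2*C1/p^r * w⁻¹ + (2*C1/p^r * w + B * 4^(r+1)/p^(2*r+2))
        * ∫ ω, ((∑ s ∈ Finset.Icc 1 T, Z s ω) / T - p) ^ (2*r+2) ∂μ := by
        rw [← hInt2]; exact hInt1
    _ ≤ 2*C1/p^r * w⁻¹ + (2*C1/p^r * w + B * 4^(r+1)/p^(2*r+2))
        * (Kc * 2^(r+1) / (T:ℝ)^(r+1)) := by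
        refine add_le_add le_rfl ?_
        exact mul_le_mul_of_nonneg_left hEX hc2pos
    _ ≤ c0 * w⁻¹ := hfinal
end
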